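/- Let a > 0 and define for κ ≥ 0 the function f(κ) = 1 − κ·tanh(κa/2) and g(κ) = 1 − κ/tanh(κa/2) (with g(0) := 1 − 2/a). Then: f has a unique positive zero ν; if additionally 1 − 2/a > 0 then g has a unique positive zero η; and in that case η < ν. Hence the operator −Δ(𝟙,𝟙) on the interval [0,a] has negative eigenvalues −ν² and −η², and −ν² < −η². -/

import Mathlib

open Real Set

lemma my_tanh_pos {t : ℝ} (ht : 0 < t) : 0 < Real.tanh t := by
  rw [Real.tanh_eq_sinh_div_cosh]
  exact div_pos (by simpa using ht) (Real.cosh_pos t)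

lemma my_tanh_lt_one (t : ℝ) : Real.tanh t < 1 := by
  rw [Real.tanh_eq_sinh_div_cosh, div_lt_one (Real.cosh_pos t)]
  nlinarith [Real.cosh_sq t, Real.cosh_pos t, sq_nonneg (Real.sinh t - Real.cosh t)]

lemma my_tanh_strictMono : StrictMono Real.tanh := by
  intro x y hxy
  rw [Real.tanh_eq_sinh_div_cosh, Real.tanh_eq_sinh_div_cosh,
    div_lt_div_iff₀ (Real.cosh_pos x) (Real.cosh_pos y), ← sub_pos]
  have := Real.sinh_sub y x
  have h1 : 0 < Real.sinh (y - x) := by simpa using sub_pos.2 hxy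
  nlinarith

lemma my_coth_mono : StrictMonoOn (fun t : ℝ => t * Real.cosh t / Real.sinh t) (Ioi 0) := by
  apply strictMonoOn_of_deriv_pos (convex_Ioi 0)
  · exact ((continuous_id.mul Real.continuous_cosh).continuousOn).div
      Real.continuous_sinh.continuousOn
      (fun t ht => by simpa [Real.sinh_ne_zero] using ne_of_gt (mem_Ioi.1 ht))
  · intro t ht
    rw [interior_Ioi, mem_Ioi] at ht
    have hs : Real.sinh t ≠ 0 := by simpa [Real.sinh_ne_zero] using ne_of_gt ht
    have hd : HasDerivAt (fun t : ℝ => t * Real.cosh t / Real.sinh t)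
        (((1 * Real.cosh t + t * Real.sinh t) * Real.sinh t
          - t * Real.cosh t * Real.cosh t) / Real.sinh t ^ 2) t :=
      (((hasDerivAt_id t).mul (Real.hasDerivAt_cosh t))).div (Real.hasDerivAt_sinh t) hs
    rw [hd.deriv]
    have hnum : (1 * Real.cosh t + t * Real.sinh t) * Real.sinh t
          - t * Real.cosh t * Real.cosh t = Real.cosh t * Real.sinh t - t := by
      nlinarith [Real.cosh_sq t]
    rw [hnum]
    have h2t : 2 * t < Real.sinh (2 * t) := Real.self_lt_sinh_iff.2 (by linarith)
    rw [Real.sinh_two_mul] at h2t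
    have : 0 < Real.sinh t ^ 2 := by positivity
    have : 0 < Real.cosh t * Real.sinh t - t := by nlinarith
    positivity

lemma my_F_mono {a : ℝ} (ha : 0 < a) :
    StrictMonoOn (fun κ : ℝ => κ * Real.tanh (κ * a / 2)) (Ici 0) := by
  intro x hx y hy hxy
  simp only [mem_Ici] at hx hy
  have ht : Real.tanh (x * a / 2) < Real.tanh (y * a / 2) := by
    apply my_tanh_strictMono; nlinarith
  have ht0 : 0 ≤ Real.tanh (x * a / 2) := by
    rcases eq_or_lt_of_le hx with h | h
    · simp [← h]
    · exact le_of_lt (my_tanh_pos (by positivity))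
  exact mul_lt_mul'' hxy ht hx ht0

lemma my_tanh_one_gt : 1 / 2 < Real.tanh 1 := by
  rw [Real.tanh_eq_sinh_div_cosh, lt_div_iff₀ (Real.cosh_pos 1), Real.sinh_eq, Real.cosh_eq]
  have h1 : Real.exp (-1) * Real.exp 1 = 1 := by
    rw [← Real.exp_add]; norm_num
  have h2 : (2.7182818283 : ℝ) < Real.exp 1 := Real.exp_one_gt_d9
  have h3 : 0 < Real.exp (-1) := Real.exp_pos _
  nlinarith

lemma my_continuous_tanh : Continuous Real.tanh := by
  have : Real.tanh = fun x => Real.sinh x / Real.cosh x :=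
    funext fun x => Real.tanh_eq_sinh_div_cosh x
  rw [this]
  exact Real.continuous_sinh.div Real.continuous_cosh fun x => (Real.cosh_pos x).ne'

-- existence of ν
lemma my_nu_exists {a : ℝ} (ha : 0 < a) :
    ∃ ν : ℝ, 0 < ν ∧ ν * Real.tanh (ν * a / 2) = 1 := by
  obtain ⟨M, hM⟩ : ∃ M : ℝ, M = 2 / a + 4 := ⟨_, rfl⟩
  have hM0 : 0 ≤ M := by rw [hM]; positivity
  have hMa : 1 ≤ M * a / 2 := by
    have : M * a / 2 = 1 + 2 * a := by rw [hM]; field_simp; ring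
    nlinarith
  have hFM : 1 ≤ M * Real.tanh (M * a / 2) := by
    have h1 : Real.tanh 1 ≤ Real.tanh (M * a / 2) := my_tanh_strictMono.le_iff_le.2 hMa
    have h2 := my_tanh_one_gt
    have hM4 : 4 ≤ M := by
      have : 0 < 2 / a := by positivity
      linarith
    nlinarith [mul_nonneg (by linarith : (0:ℝ) ≤ M - 4)
      (by linarith : (0:ℝ) ≤ Real.tanh (M * a / 2) - 1/2)]
  have hcont : ContinuousOn (fun κ : ℝ => κ * Real.tanh (κ * a / 2)) (Icc 0 M) := by
    apply Continuous.continuousOn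
    exact continuous_id.mul (my_continuous_tanh.comp (by continuity))
  have := intermediate_value_Icc hM0 hcont
  have h1mem : (1 : ℝ) ∈ Icc ((fun κ : ℝ => κ * Real.tanh (κ * a / 2)) 0)
      ((fun κ : ℝ => κ * Real.tanh (κ * a / 2)) M) := by
    constructor <;> simp [hFM]
  obtain ⟨ν, hν, hνeq⟩ := this h1mem
  refine ⟨ν, ?_, hνeq⟩
  rcases eq_or_lt_of_le hν.1 with h | h
  · exfalso; simp [← h] at hνeq
  · exact h

lemma my_sinh_lt_cosh (t : ℝ) : Real.sinh t < Real.cosh t := by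
  have := Real.cosh_sub_sinh t
  have := Real.exp_pos (-t)
  linarith

lemma my_G_eq {a : ℝ} (ha : 0 < a) {κ : ℝ} (hκ : 0 < κ) :
    κ / Real.tanh (κ * a / 2) =
      2 / a * (κ * a / 2 * Real.cosh (κ * a / 2) / Real.sinh (κ * a / 2)) := by
  have ht : (0:ℝ) < κ * a / 2 := by positivity
  have hs : Real.sinh (κ * a / 2) ≠ 0 := by
    simpa [Real.sinh_ne_zero] using ne_of_gt ht
  have hc : Real.cosh (κ * a / 2) ≠ 0 := (Real.cosh_pos _).ne'
  rw [Real.tanh_eq_sinh_div_cosh]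
  field_simp

lemma my_G_mono {a : ℝ} (ha : 0 < a) :
    StrictMonoOn (fun κ : ℝ => κ / Real.tanh (κ * a / 2)) (Ioi 0) := by
  intro x hx y hy hxy
  rw [mem_Ioi] at hx hy
  simp only [my_G_eq ha hx, my_G_eq ha hy]
  have h1 : x * a / 2 ∈ Ioi (0:ℝ) := by rw [mem_Ioi]; positivity
  have h2 : y * a / 2 ∈ Ioi (0:ℝ) := by rw [mem_Ioi]; positivity
  have h3 : x * a / 2 < y * a / 2 := by nlinarith
  exact mul_lt_mul_of_pos_left (my_coth_mono h1 h2 h3) (by positivity)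

lemma my_eta_exists {a : ℝ} (ha : 0 < a) (h2a : 2 < a) :
    ∃ η : ℝ, 0 < η ∧ η / Real.tanh (η * a / 2) = 1 := by
  obtain ⟨κ₀, hκ₀⟩ : ∃ κ₀ : ℝ, κ₀ = 2 / a * Real.log (a / 2) := ⟨_, rfl⟩
  have hlog : 0 < Real.log (a / 2) := Real.log_pos (by linarith)
  have hκ₀pos : 0 < κ₀ := by rw [hκ₀]; positivity
  have ht₀ : κ₀ * a / 2 = Real.log (a / 2) := by
    rw [hκ₀]; field_simp
  -- G κ₀ ≤ 1
  have hGκ₀ : κ₀ / Real.tanh (κ₀ * a / 2) ≤ 1 := by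
    rw [my_G_eq ha hκ₀pos, ht₀]
    obtain ⟨t, htdef⟩ : ∃ t : ℝ, t = Real.log (a / 2) := ⟨_, rfl⟩
    rw [← htdef]
    have htpos : 0 < t := htdef ▸ hlog
    have hsinh : t ≤ Real.sinh t := Real.self_le_sinh_iff.2 htpos.le
    have hspos : 0 < Real.sinh t := by simpa using htpos
    have hcpos : 0 < Real.cosh t := Real.cosh_pos t
    have hcosh_exp : Real.cosh t ≤ a / 2 := by
      have h1 : Real.exp t = a / 2 := by rw [htdef]; exact Real.exp_log (by linarith)
      have h2 : Real.exp (-t) ≤ Real.exp t := Real.exp_le_exp.2 (by linarith)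
      rw [Real.cosh_eq]; linarith
    have key : t * Real.cosh t / Real.sinh t ≤ a / 2 := by
      rw [div_le_iff₀ hspos]
      nlinarith
    calc 2 / a * (t * Real.cosh t / Real.sinh t) ≤ 2 / a * (a / 2) := by
          apply mul_le_mul_of_nonneg_left key (by positivity)
      _ = 1 := by field_simp
  -- G (κ₀ + 2) ≥ 1
  have hGM : 1 ≤ (κ₀ + 2) / Real.tanh ((κ₀ + 2) * a / 2) := by
    have hu : (0:ℝ) < (κ₀ + 2) * a / 2 := by positivity
    have hT1 : Real.tanh ((κ₀ + 2) * a / 2) < 1 := my_tanh_lt_one _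
    have hT0 : 0 < Real.tanh ((κ₀ + 2) * a / 2) := my_tanh_pos hu
    rw [le_div_iff₀ hT0]
    nlinarith
  have hcont : ContinuousOn (fun κ : ℝ => κ / Real.tanh (κ * a / 2)) (Icc κ₀ (κ₀ + 2)) := by
    apply ContinuousOn.div continuousOn_id
      ((my_continuous_tanh.comp (by continuity)).continuousOn)
    intro κ hκ
    have : 0 < κ := lt_of_lt_of_le hκ₀pos hκ.1
    exact (my_tanh_pos (by positivity)).ne'
  have h1mem : (1:ℝ) ∈ Icc ((fun κ : ℝ => κ / Real.tanh (κ * a / 2)) κ₀)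
      ((fun κ : ℝ => κ / Real.tanh (κ * a / 2)) (κ₀ + 2)) := ⟨hGκ₀, hGM⟩
  obtain ⟨η, hη, hηeq⟩ := intermediate_value_Icc (by linarith : κ₀ ≤ κ₀ + 2) hcont h1mem
  exact ⟨η, lt_of_lt_of_le hκ₀pos hη.1, hηeq⟩

theorem stmt14 (a : ℝ) (ha : 0 < a) :
    (∃! ν : ℝ, 0 < ν ∧ 1 - ν * Real.tanh (ν * a / 2) = 0) ∧
    (0 < 1 - 2 / a →
      (∃! η : ℝ, 0 < η ∧ 1 - η / Real.tanh (η * a / 2) = 0) ∧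
      ∀ ν η : ℝ, 0 < ν → 1 - ν * Real.tanh (ν * a / 2) = 0 →
        0 < η → 1 - η / Real.tanh (η * a / 2) = 0 →
        η < ν ∧ -ν ^ 2 < -η ^ 2) := by
  constructor
  · obtain ⟨ν, hν, hνeq⟩ := my_nu_exists ha
    refine ⟨ν, ⟨hν, by rw [hνeq]; ring⟩, ?_⟩
    rintro y ⟨hy, hyeq⟩
    exact (my_F_mono ha).injOn (mem_Ici.2 hy.le) (mem_Ici.2 hν.le)
      (by show _ = _; linarith)
  · intro h2a
    have haa : 2 < a := by
      have h := (div_lt_one ha).mp (by linarith : 2 / a < 1)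
      exact h
    constructor
    · obtain ⟨η, hη, hηeq⟩ := my_eta_exists ha haa
      refine ⟨η, ⟨hη, by rw [hηeq]; ring⟩, ?_⟩
      rintro y ⟨hy, hyeq⟩
      exact (my_G_mono ha).injOn (mem_Ioi.2 hy) (mem_Ioi.2 hη)
        (by show _ = _; linarith)
    · intro ν η hν hνeq hη hηeq
      have hT : 0 < Real.tanh (η * a / 2) := my_tanh_pos (by positivity)
      have hηT : η = Real.tanh (η * a / 2) := by
        have : η / Real.tanh (η * a / 2) = 1 := by linarith
        field_simp at this
        linarith
      have hη1 : η < 1 := hηT ▸ my_tanh_lt_one (η * a / 2)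
      have hFη : η * Real.tanh (η * a / 2) < 1 := by
        rw [← hηT]; nlinarith
      have hFν : ν * Real.tanh (ν * a / 2) = 1 := by linarith
      have hlt : η < ν := by
        have := (my_F_mono ha).lt_iff_lt (mem_Ici.2 hη.le) (mem_Ici.2 hν.le)
        rw [← this]
        show η * Real.tanh (η * a / 2) < ν * Real.tanh (ν * a / 2)
        linarith
      exact ⟨hlt, by nlinarith⟩
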